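/- On the null-shell chart U of the Schwarzschild exterior of mass M, the vector fields R := (p_{r*}/Ω²)·∂_{r*} + ((r−3M)/r⁴)·ℓ²·∂_{p_{r*}} and L := g(r)·∂_r + p_{r*}·∂_{p_{r*}}, where g(r) := r(r−3M)(r+6M)/(27M²), satisfy the Lie bracket identity [R, L] = ((r−3M)(r+5M)/(9M²))·R at every point of U. -/

import Mathlib

open Real

noncomputable section

namespace SchwVlasov

/-- Points of the null-shell chart: coordinates `(t, r, θ, φ, p_{r*}, p_θ, p_φ)`. -/
abbrev Pt : Type := Fin 7 → ℝ

/-- The null-shell chart `U`: `r > 2M`, `θ ∈ (0, π)`, `p_θ² + p_φ²/sin²θ > 0`. -/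
def U (M : ℝ) : Set Pt :=
  {x | 2 * M < x 1 ∧ 0 < x 2 ∧ x 2 < Real.pi ∧
    0 < (x 5) ^ 2 + (x 6) ^ 2 / (Real.sin (x 2)) ^ 2}

/-- The Lie bracket `[V, W](x) = DW(x)·V(x) − DV(x)·W(x)` of vector fields on `ℝ⁷`. -/
def lieBracket (V W : Pt → Pt) (x : Pt) : Pt :=
  fderiv ℝ W x (V x) - fderiv ℝ V x (W x)

/-- `Ω²(r) = 1 − 2M/r`. -/
def Om2 (M : ℝ) (x : Pt) : ℝ := 1 - 2 * M / x 1

/-- `Ω(r) = (1 − 2M/r)^{1/2}`. -/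
def Om (M : ℝ) (x : Pt) : ℝ := Real.sqrt (Om2 M x)

/-- The total angular momentum `ℓ = (p_θ² + p_φ²/sin²θ)^{1/2}`. -/
def ell (x : Pt) : ℝ := Real.sqrt ((x 5) ^ 2 + (x 6) ^ 2 / (Real.sin (x 2)) ^ 2)

/-- `p_t = −(p_{r*}² + Ω²ℓ²/r²)^{1/2}`. -/
def ptm (M : ℝ) (x : Pt) : ℝ := -Real.sqrt ((x 4) ^ 2 + Om2 M x * (ell x) ^ 2 / (x 1) ^ 2)

/-- The coordinate vector field `∂_t`. -/
def dt : Pt := ![1, 0, 0, 0, 0, 0, 0]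
/-- The coordinate vector field `∂_r`. -/
def dr : Pt := ![0, 1, 0, 0, 0, 0, 0]
/-- The coordinate vector field `∂_θ`. -/
def dth : Pt := ![0, 0, 1, 0, 0, 0, 0]
/-- The coordinate vector field `∂_φ`. -/
def dph : Pt := ![0, 0, 0, 1, 0, 0, 0]
/-- The coordinate vector field `∂_{p_{r*}}`. -/
def dpr : Pt := ![0, 0, 0, 0, 1, 0, 0]
/-- The coordinate vector field `∂_{p_θ}`. -/
def dpth : Pt := ![0, 0, 0, 0, 0, 1, 0]

/-- The tortoise radial derivative `∂_{r*} = Ω²·∂_r`, viewed as a vector field. -/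
def drstar (M : ℝ) (x : Pt) : Pt := Om2 M x • dr

/-- The geodesic spray `𝕏_g`. -/
def Xg (M : ℝ) (x : Pt) : Pt :=
  (-(ptm M x) / Om2 M x) • dt + (x 4 / Om2 M x) • drstar M x
    + (x 5 / (x 1) ^ 2) • dth + (x 6 / ((x 1) ^ 2 * (Real.sin (x 2)) ^ 2)) • dph
    + ((x 1 - 3 * M) / (x 1) ^ 4 * (ell x) ^ 2) • dpr
    + (Real.cos (x 2) / ((x 1) ^ 2 * (Real.sin (x 2)) ^ 3) * (x 6) ^ 2) • dpth

/-- The radial part `R = (p_{r*}/Ω²)·∂_{r*} + ((r−3M)/r⁴)·ℓ²·∂_{p_{r*}}`. -/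
def Rvf (M : ℝ) (x : Pt) : Pt :=
  (x 4 / Om2 M x) • drstar M x + ((x 1 - 3 * M) / (x 1) ^ 4 * (ell x) ^ 2) • dpr

/-- `g(r) = r(r−3M)(r+6M)/(27M²)`. -/
def gfun (M rv : ℝ) : ℝ := rv * (rv - 3 * M) * (rv + 6 * M) / (27 * M ^ 2)

/-- The radial scaling vector field `L = g(r)·∂_r + p_{r*}·∂_{p_{r*}}`. -/
def Lvf (M : ℝ) (x : Pt) : Pt := gfun M (x 1) • dr + x 4 • dpr

set_option maxHeartbeats 1000000 in
/-- `[R, L] = ((r−3M)(r+5M)/(9M²))·R` on the null-shell chart. -/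
theorem bracket_R_L (M : ℝ) (hM : 0 < M) (x : Pt) (hx : x ∈ U M) :
    lieBracket (Rvf M) (Lvf M) x
      = ((x 1 - 3 * M) * (x 1 + 5 * M) / (9 * M ^ 2)) • Rvf M x := by
  obtain ⟨hr, hθ0, hθπ, hℓ⟩ := hx
  have hrpos : 0 < x 1 := lt_trans (by linarith) hr
  have hs : Real.sin (x 2) ≠ 0 := (Real.sin_pos_of_pos_of_lt_pi hθ0 hθπ).ne'
  have hx1 : x 1 ≠ 0 := ne_of_gt hrpos
  have hx4 : (x 1) ^ 4 ≠ 0 := by positivity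
  have hssq : ((Real.sin (x 2)) ^ 2 : ℝ) ≠ 0 := pow_ne_zero _ hs
  -- Rvf agrees with the polynomial field F near x
  have hV : Rvf M =ᶠ[nhds x] (fun y : Pt => y 4 • dr +
      ((y 1 - 3 * M) * ((y 1) ^ 4)⁻¹ *
        ((y 5) ^ 2 + (y 6) ^ 2 * ((Real.sin (y 2)) ^ 2)⁻¹)) • dpr) := by
    have hmem : {y : Pt | 2 * M < y 1} ∈ nhds x :=
      (isOpen_lt continuous_const (continuous_apply 1)).mem_nhds hr
    filter_upwards [hmem] with y hy
    have hy1 : 0 < y 1 := lt_trans (by linarith) hy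
    have hΩ : Om2 M y ≠ 0 := by
      have : 2 * M / y 1 < 1 := (div_lt_one hy1).mpr hy
      simp only [Om2]; linarith
    have hell : (ell y) ^ 2 = (y 5) ^ 2 + (y 6) ^ 2 / (Real.sin (y 2)) ^ 2 :=
      Real.sq_sqrt (by positivity)
    simp only [Rvf, drstar, smul_smul, hell, div_eq_mul_inv,
      inv_mul_cancel_right₀ hΩ]
  have hproj : ∀ i : Fin 7, HasFDerivAt (fun y : Pt => y i)
      (ContinuousLinearMap.proj i : Pt →L[ℝ] ℝ) x := fun i =>
    (ContinuousLinearMap.proj i : Pt →L[ℝ] ℝ).hasFDerivAt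
  -- leaf derivatives
  have hpow4 : HasFDerivAt (fun y : Pt => (y 1) ^ 4)
      (((4 : ℝ) * x 1 ^ 3) • (ContinuousLinearMap.proj 1 : Pt →L[ℝ] ℝ)) x := by
    simpa [Function.comp_def] using
      (hasDerivAt_pow 4 (x 1)).comp_hasFDerivAt x (hproj 1)
  have hinv4 : HasFDerivAt (fun y : Pt => ((y 1) ^ 4)⁻¹)
      (-((((x 1) ^ 4) ^ 2)⁻¹ • (((4 : ℝ) * x 1 ^ 3) •
        (ContinuousLinearMap.proj 1 : Pt →L[ℝ] ℝ)))) x := by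
    simpa [Function.comp_def] using
      (hasDerivAt_inv hx4).comp_hasFDerivAt x hpow4
  have hsin : HasFDerivAt (fun y : Pt => Real.sin (y 2))
      (Real.cos (x 2) • (ContinuousLinearMap.proj 2 : Pt →L[ℝ] ℝ)) x := by
    simpa [Function.comp_def] using
      (Real.hasDerivAt_sin (x 2)).comp_hasFDerivAt x (hproj 2)
  have hpowsin : HasFDerivAt (fun y : Pt => (Real.sin (y 2)) ^ 2)
      (((2 : ℝ) * Real.sin (x 2)) • (Real.cos (x 2) •
        (ContinuousLinearMap.proj 2 : Pt →L[ℝ] ℝ))) x := by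
    simpa [Function.comp_def] using
      (hasDerivAt_pow 2 (Real.sin (x 2))).comp_hasFDerivAt x hsin
  have hsinv : HasFDerivAt (fun y : Pt => ((Real.sin (y 2)) ^ 2)⁻¹)
      (-((((Real.sin (x 2)) ^ 2) ^ 2)⁻¹ • (((2 : ℝ) * Real.sin (x 2)) •
        (Real.cos (x 2) • (ContinuousLinearMap.proj 2 : Pt →L[ℝ] ℝ))))) x := by
    simpa [Function.comp_def] using
      (hasDerivAt_inv hssq).comp_hasFDerivAt x hpowsin
  have hpow5 : HasFDerivAt (fun y : Pt => (y 5) ^ 2)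
      (((2 : ℝ) * x 5) • (ContinuousLinearMap.proj 5 : Pt →L[ℝ] ℝ)) x := by
    simpa [Function.comp_def] using
      (hasDerivAt_pow 2 (x 5)).comp_hasFDerivAt x (hproj 5)
  have hpow6 : HasFDerivAt (fun y : Pt => (y 6) ^ 2)
      (((2 : ℝ) * x 6) • (ContinuousLinearMap.proj 6 : Pt →L[ℝ] ℝ)) x := by
    simpa [Function.comp_def] using
      (hasDerivAt_pow 2 (x 6)).comp_hasFDerivAt x (hproj 6)
  -- assembled derivatives
  have hFder : HasFDerivAt (fun y : Pt => y 4 • dr +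
      ((y 1 - 3 * M) * ((y 1) ^ 4)⁻¹ *
        ((y 5) ^ 2 + (y 6) ^ 2 * ((Real.sin (y 2)) ^ 2)⁻¹)) • dpr) _ x := ((hproj 4).smul_const dr).add
    (((((hproj 1).sub_const (3 * M)).mul hinv4).mul
      (hpow5.add (hpow6.mul hsinv))).smul_const dpr)
  beta_reduce at hFder
  have hLexp : Lvf M = fun y : Pt =>
      (y 1 * (y 1 - 3 * M) * (y 1 + 6 * M) * ((27 * M ^ 2))⁻¹) • dr + y 4 • dpr := by
    funext y
    simp [Lvf, gfun, div_eq_mul_inv]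
  have hLder : HasFDerivAt (fun y : Pt =>
      (y 1 * (y 1 - 3 * M) * (y 1 + 6 * M) * ((27 * M ^ 2))⁻¹) • dr + y 4 • dpr) _ x :=
    (((((hproj 1).mul ((hproj 1).sub_const (3 * M))).mul
      ((hproj 1).add_const (6 * M))).mul_const ((27 * M ^ 2 : ℝ))⁻¹).smul_const dr).add
      ((hproj 4).smul_const dpr)
  beta_reduce at hLder
  have hRx : Rvf M x = x 4 • dr +
      ((x 1 - 3 * M) * ((x 1) ^ 4)⁻¹ *
        ((x 5) ^ 2 + (x 6) ^ 2 * ((Real.sin (x 2)) ^ 2)⁻¹)) • dpr := hV.eq_of_nhds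
  rw [lieBracket, hLexp, hV.fderiv_eq, hFder.fderiv, hLder.fderiv, hRx]
  have hM2 : (M : ℝ) ≠ 0 := ne_of_gt hM
  have hdr0 : dr 0 = 0 := rfl
  have hdr1 : dr 1 = 1 := rfl
  have hdr2 : dr 2 = 0 := rfl
  have hdr3 : dr 3 = 0 := rfl
  have hdr4 : dr 4 = 0 := rfl
  have hdr5 : dr 5 = 0 := rfl
  have hdr6 : dr 6 = 0 := rfl
  have hdpr0 : dpr 0 = 0 := rfl
  have hdpr1 : dpr 1 = 0 := rfl
  have hdpr2 : dpr 2 = 0 := rfl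
  have hdpr3 : dpr 3 = 0 := rfl
  have hdpr4 : dpr 4 = 1 := rfl
  have hdpr5 : dpr 5 = 0 := rfl
  have hdpr6 : dpr 6 = 0 := rfl
  simp only [ContinuousLinearMap.add_apply, ContinuousLinearMap.smul_apply,
    ContinuousLinearMap.neg_apply, ContinuousLinearMap.proj_apply,
    ContinuousLinearMap.smulRight_apply, ContinuousLinearMap.coe_smul',
    Pi.smul_apply, Pi.add_apply, Pi.mul_apply, smul_eq_mul, hdr0, hdr1, hdr2, hdr3, hdr4,
    hdr5, hdr6, hdpr0, hdpr1, hdpr2, hdpr3, hdpr4, hdpr5, hdpr6,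
    mul_zero, zero_mul, mul_one, add_zero, zero_add, neg_zero]
  match_scalars <;> field_simp <;> ring

end SchwVlasov
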